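/- If a smooth function f: ℝ → ℂ has the form f(τ) = c·((1−τ)^a · ln(1−τ) · P(τ) + (1+τ)^b · ln(1+τ) · Q(τ)) + R(τ) on (−1,1), where a, b ≥ 1 are integers, P, Q, R are polynomials, and c is a constant, then f extends continuously to [−1,1]; moreover if c ≠ 0, a = 1, and P(1) ≠ 0, then f is not of class C¹ at τ = 1. -/

import Mathlib

open Complex Set Filter Topology

private lemma contPowLog (a : ℕ) (ha : 1 ≤ a) :
    Continuous fun x : ℝ => x ^ a * Real.log x := by
  have h : ∀ x : ℝ, x ^ a * Real.log x = x ^ (a - 1) * (x * Real.log x) := fun x => by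
    rw [← mul_assoc, ← pow_succ, Nat.sub_add_cancel ha]
  simpa only [h, Pi.mul_def] using (continuous_pow (a - 1)).mul Real.continuous_mul_log

/-- a function of the generic Bianchi-transport form
`f(τ) = c((1-τ)^a ln(1-τ) P(τ) + (1+τ)^b ln(1+τ) Q(τ)) + R(τ)` on `(-1,1)` extends
continuously to `[-1,1]`; if moreover `c ≠ 0`, `a = 1` and `P(1) ≠ 0`, then no extension
of `f` is differentiable (C¹) at `τ = 1`. -/
theorem transport_coefficient_structure (f : ℝ → ℂ) (c : ℂ) (a b : ℕ)
    (ha : 1 ≤ a) (hb : 1 ≤ b) (P Q R : Polynomial ℂ)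
    (hf : ∀ τ ∈ Ioo (-1 : ℝ) 1,
      f τ = c * ((1 - (τ : ℂ)) ^ a * (Real.log (1 - τ) : ℂ) * P.eval (τ : ℂ)
        + (1 + (τ : ℂ)) ^ b * (Real.log (1 + τ) : ℂ) * Q.eval (τ : ℂ)) + R.eval (τ : ℂ)) :
    (∃ g : ℝ → ℂ, ContinuousOn g (Icc (-1 : ℝ) 1) ∧ ∀ τ ∈ Ioo (-1 : ℝ) 1, g τ = f τ) ∧
    (c ≠ 0 → a = 1 → P.eval 1 ≠ 0 →
      ¬ ∃ g : ℝ → ℂ, (∀ τ ∈ Ioo (-1 : ℝ) 1, g τ = f τ) ∧ DifferentiableAt ℝ g 1) := by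
  have hP : Continuous fun τ : ℝ => P.eval (τ : ℂ) :=
    (Polynomial.continuous P).comp Complex.continuous_ofReal
  have hQ : Continuous fun τ : ℝ => Q.eval (τ : ℂ) :=
    (Polynomial.continuous Q).comp Complex.continuous_ofReal
  have hR : Continuous fun τ : ℝ => R.eval (τ : ℂ) :=
    (Polynomial.continuous R).comp Complex.continuous_ofReal
  constructor
  · -- continuous extension
    refine ⟨fun τ => c * ((((1 - τ) ^ a * Real.log (1 - τ) : ℝ) : ℂ) * P.eval (τ : ℂ)
        + (((1 + τ) ^ b * Real.log (1 + τ) : ℝ) : ℂ) * Q.eval (τ : ℂ)) + R.eval (τ : ℂ),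
      ?_, ?_⟩
    · have hA : Continuous fun τ : ℝ => (((1 - τ) ^ a * Real.log (1 - τ) : ℝ) : ℂ) :=
        Complex.continuous_ofReal.comp
          ((contPowLog a ha).comp (continuous_const.sub continuous_id))
      have hB : Continuous fun τ : ℝ => (((1 + τ) ^ b * Real.log (1 + τ) : ℝ) : ℂ) :=
        Complex.continuous_ofReal.comp
          ((contPowLog b hb).comp (continuous_const.add continuous_id))
      exact ((continuous_const.mul ((hA.mul hP).add (hB.mul hQ))).add hR).continuousOn
    · intro τ hτ
      rw [hf τ hτ]
      push_cast
      ring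
  · -- non-differentiability
    rintro hc rfl hP1 ⟨g, hg, hdiff⟩
    -- the smooth part
    set S : ℝ → ℂ := fun τ =>
      c * ((1 + (τ : ℂ)) ^ b * (Real.log (1 + τ) : ℂ) * Q.eval (τ : ℂ)) + R.eval (τ : ℂ) with hSdef
    have hS : DifferentiableAt ℝ S 1 := by
      have d0 : DifferentiableAt ℝ (fun τ : ℝ => ((τ : ℂ))) 1 :=
        Complex.ofRealCLM.differentiableAt
      have d1 : DifferentiableAt ℝ (fun τ : ℝ => (1 + (τ : ℂ)) ^ b) 1 :=
        ((differentiableAt_const _).add d0).pow b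
      have d2r : DifferentiableAt ℝ (fun τ : ℝ => Real.log (1 + τ)) 1 :=
        ((differentiableAt_const _).add differentiableAt_id).log (by norm_num)
      have d2 : DifferentiableAt ℝ (fun τ : ℝ => ((Real.log (1 + τ) : ℂ))) 1 :=
        Complex.ofRealCLM.differentiableAt.comp 1 d2r
      have d3 : DifferentiableAt ℝ (fun τ : ℝ => Q.eval (τ : ℂ)) 1 :=
        ((Q.differentiableAt).restrictScalars ℝ).comp 1 d0
      have d4 : DifferentiableAt ℝ (fun τ : ℝ => R.eval (τ : ℂ)) 1 :=
        ((R.differentiableAt).restrictScalars ℝ).comp 1 d0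
      exact (((d1.mul d2).mul d3).const_mul c).add d4
    set h : ℝ → ℂ := fun τ => g τ - S τ with hhdef
    have hh : DifferentiableAt ℝ h 1 := hdiff.sub hS
    have hIoo : Ioo (-1 : ℝ) 1 ∈ 𝓝[<] (1 : ℝ) :=
      Ioo_mem_nhdsLT_of_mem (by constructor <;> norm_num)
    have heq : ∀ τ ∈ Ioo (-1 : ℝ) 1,
        h τ = c * (1 - (τ : ℂ)) * (Real.log (1 - τ) : ℂ) * P.eval (τ : ℂ) := by
      intro τ hτ
      simp only [hhdef, hSdef, hg τ hτ, hf τ hτ, pow_one]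
      ring
    -- h tends to 0 from the left
    have cont1 : Continuous fun τ : ℝ => (1 - τ) * Real.log (1 - τ) :=
      Real.Continuous.mul_log (continuous_const.sub continuous_id)
    have tmul : Tendsto (fun τ : ℝ => (1 - τ) * Real.log (1 - τ)) (𝓝 (1 : ℝ)) (𝓝 0) := by
      simpa using cont1.tendsto 1
    have t0 : Tendsto (fun τ : ℝ =>
        c * (1 - (τ : ℂ)) * (Real.log (1 - τ) : ℂ) * P.eval (τ : ℂ)) (𝓝[<] 1) (𝓝 0) := by
      have t1 : Tendsto (fun τ : ℝ => (((1 - τ) * Real.log (1 - τ) : ℝ) : ℂ)) (𝓝 (1 : ℝ))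
          (𝓝 0) := by
        have := (Complex.continuous_ofReal.comp cont1).tendsto 1
        simpa [Function.comp_def] using this
      have t2 : Tendsto (fun τ : ℝ =>
          c * (((1 - τ) * Real.log (1 - τ) : ℝ) : ℂ) * P.eval (τ : ℂ)) (𝓝 (1 : ℝ)) (𝓝 0) := by
        have := ((t1.const_mul c).mul (hP.tendsto 1))
        simpa using this
      refine Tendsto.congr (fun τ => by push_cast; ring) (t2.mono_left nhdsWithin_le_nhds)
    have h1 : h 1 = 0 := by
      have hcont : Tendsto h (𝓝[<] 1) (𝓝 (h 1)) :=
        (hh.continuousAt.tendsto).mono_left nhdsWithin_le_nhds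
      have h2 : Tendsto h (𝓝[<] 1) (𝓝 0) :=
        t0.congr' (eventually_of_mem hIoo fun τ hτ => (heq τ hτ).symm)
      exact tendsto_nhds_unique hcont h2
    -- slope tends to a finite limit
    obtain ⟨d, hd⟩ : ∃ d, HasDerivAt h d 1 := ⟨_, hh.hasDerivAt⟩
    have hslope : Tendsto (slope h 1) (𝓝[<] 1) (𝓝 d) :=
      (hasDerivAt_iff_tendsto_slope.mp hd).mono_left
        (nhdsWithin_mono 1 fun y hy => ne_of_lt hy)
    have hslope' : Tendsto (fun τ : ℝ =>
        -(c * (Real.log (1 - τ) : ℂ) * P.eval (τ : ℂ))) (𝓝[<] 1) (𝓝 d) := by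
      refine hslope.congr' (eventually_of_mem hIoo fun τ hτ => ?_)
      have hne : ((τ : ℂ)) - 1 ≠ 0 := by
        rw [sub_ne_zero]
        exact_mod_cast ne_of_lt hτ.2
      simp only [slope_def_module, heq τ hτ, h1, sub_zero, Complex.real_smul]
      push_cast
      field_simp
      ring
    -- but its norm blows up
    have tlog : Tendsto (fun τ : ℝ => Real.log (1 - τ)) (𝓝[<] 1) atBot := by
      refine Real.tendsto_log_nhdsGT_zero.comp ?_
      refine tendsto_nhdsWithin_of_tendsto_nhds_of_eventually_within _ ?_ ?_
      · have t : Tendsto (fun τ : ℝ => 1 - τ) (𝓝 (1 : ℝ)) (𝓝 (1 - 1)) :=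
          (continuous_const.sub continuous_id).tendsto 1
        simpa using t.mono_left nhdsWithin_le_nhds
      · exact eventually_of_mem self_mem_nhdsWithin fun τ hτ => by
          simp only [mem_Ioi, sub_pos]; exact hτ
    have tnorm : Tendsto (fun τ : ℝ =>
        ‖-(c * (Real.log (1 - τ) : ℂ) * P.eval (τ : ℂ))‖) (𝓝[<] 1) atTop := by
      have tabs : Tendsto (fun τ : ℝ => |Real.log (1 - τ)|) (𝓝[<] 1) atTop :=
        tendsto_abs_atBot_atTop.comp tlog
      have tPn : Tendsto (fun τ : ℝ => ‖P.eval (τ : ℂ)‖) (𝓝[<] 1)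
          (𝓝 ‖P.eval (1 : ℂ)‖) := by
        have := ((continuous_norm.comp hP).tendsto 1).mono_left
          (nhdsWithin_le_nhds : 𝓝[<] (1:ℝ) ≤ 𝓝 1)
        simpa [Function.comp_def] using this
      have hPpos : 0 < ‖P.eval (1 : ℂ)‖ := norm_pos_iff.mpr hP1
      have := (tabs.atTop_mul_pos hPpos tPn).const_mul_atTop (norm_pos_iff.mpr hc)
      refine this.congr fun τ => ?_
      rw [norm_neg, norm_mul, norm_mul, Complex.norm_real, Real.norm_eq_abs, mul_assoc]
    have tnorm' : Tendsto (fun τ : ℝ =>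
        ‖-(c * (Real.log (1 - τ) : ℂ) * P.eval (τ : ℂ))‖) (𝓝[<] 1) (𝓝 ‖d‖) :=
      (continuous_norm.tendsto d).comp hslope'
    exact not_tendsto_atTop_of_tendsto_nhds tnorm' tnorm
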